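/- Assume f(t,z) ≥ g(z) for all t,z ≥ 0, where g : [0,∞) → ℝ is continuous. Let v be a nonnegative classical solution of ∂_s v = Δv + g(v) on (0,∞)×ℝ^N whose initial datum v₀ is continuous, satisfies 0 ≤ v₀ ≤ θ', and is supported in the closed ball of radius R centered at the origin; suppose v(T,0) > θ for some T > 0 and some θ > θ' > 0. Let u be a nonnegative classical solution of ∂_t u = Δu + f(t,u) on (0,∞)×ℝ^N. Then for every t > 0 and every ξ ∈ ℝ^N with |ξ| < r_{θ'}(t) − R one has u(t+T, ξ) > θ; in particular r_θ(t+T) ≥ r_{θ'}(t) − R, where r_θ denotes the centered inscribed radius of u at level θ. -/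

import Mathlib

open Filter Metric Set
open scoped ENNReal NNReal

/-- The Laplacian of a function on Euclidean space, as the sum of second partial
derivatives in the coordinate directions. -/
noncomputable def laplacian {N : ℕ} (φ : EuclideanSpace ℝ (Fin N) → ℝ)
    (x : EuclideanSpace ℝ (Fin N)) : ℝ :=
  ∑ i : Fin N, fderiv ℝ (fun y => fderiv ℝ φ y (EuclideanSpace.single i (1:ℝ))) x
    (EuclideanSpace.single i (1:ℝ))

/-- Standing assumptions: `f (t, z)` is Hölder continuous in `t`, Lipschitz continuous
in `z` uniformly in `t`, and `f (t, 0) = 0` for all `t > 0`. -/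
def StandingAssumptions (f : ℝ → ℝ → ℝ) : Prop :=
  (∃ a : ℝ, 0 < a ∧ a ≤ 1 ∧ ∃ C : ℝ, ∀ z : ℝ, ∀ t ∈ Set.Ioi (0:ℝ), ∀ s ∈ Set.Ioi (0:ℝ),
    |f t z - f s z| ≤ C * |t - s| ^ a) ∧
  (∃ L : ℝ≥0, ∀ t > (0:ℝ), LipschitzWith L (fun z => f t z)) ∧
  (∀ t > (0:ℝ), f t 0 = 0)

/-- A classical solution of `∂ₜ u = Δu + f(t,u)` on `(0,∞) × ℝᴺ` with initial datum `u₀`: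
continuous on `[0,∞) × ℝᴺ`, bounded on `[0,T] × ℝᴺ` for every `T > 0`, `C¹` in `t` and
`C²` in `x` for `t > 0`, satisfying the equation pointwise for `t > 0`, and `u(0,·) = u₀`. -/
structure IsClassicalSolution {N : ℕ} (f : ℝ → ℝ → ℝ)
    (u : ℝ → EuclideanSpace ℝ (Fin N) → ℝ)
    (u₀ : EuclideanSpace ℝ (Fin N) → ℝ) : Prop where
  cont : ContinuousOn (Function.uncurry u)
    (Set.Ici (0:ℝ) ×ˢ (Set.univ : Set (EuclideanSpace ℝ (Fin N))))
  bounded : ∀ T > (0:ℝ), ∃ C : ℝ, ∀ t ∈ Set.Icc (0:ℝ) T, ∀ x, |u t x| ≤ C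
  time_diff : ∀ x, ∀ t > (0:ℝ), DifferentiableAt ℝ (fun s => u s x) t
  space_smooth : ∀ t > (0:ℝ), ContDiff ℝ 2 (u t)
  eqn : ∀ t > (0:ℝ), ∀ x, deriv (fun s => u s x) t = laplacian (u t) x + f t (u t x)
  init : u 0 = u₀

/-- Invasion property with level `Z ∈ (0, +∞]`: for every compact `K`,
`liminf_{t→∞} min_{x ∈ K} u (t, x) ≥ Z`, i.e. for every real `z` (strictly) below `Z`,
eventually `u (t, ·) ≥ z` on `K`. -/
def Invades {N : ℕ} (u : ℝ → EuclideanSpace ℝ (Fin N) → ℝ) (Z : ℝ≥0∞) : Prop :=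
  ∀ z : ℝ, ENNReal.ofReal z < Z →
    ∀ K : Set (EuclideanSpace ℝ (Fin N)), IsCompact K →
      ∃ t₀ : ℝ, ∀ t ≥ t₀, ∀ x ∈ K, z ≤ u t x

/-- The upper level set `U_θ(t) = {x : u (t, x) > θ}`. -/
def upperLevelSet {N : ℕ} (u : ℝ → EuclideanSpace ℝ (Fin N) → ℝ) (θ t : ℝ) :
    Set (EuclideanSpace ℝ (Fin N)) := {x | θ < u t x}

/-- The inner radius `ℛⁱ_θ(t)`: the supremum of radii of balls contained in the upper
level set `U_θ(t)`. -/
noncomputable def innerRadius {N : ℕ} (u : ℝ → EuclideanSpace ℝ (Fin N) → ℝ)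
    (θ t : ℝ) : ℝ :=
  sSup {r : ℝ | ∃ x₀, ∀ x ∈ Metric.ball x₀ r, θ < u t x}

/-- The outer radius `ℛᵉ_θ(t)`: the infimum of radii of balls containing the upper
level set `U_θ(t)`. -/
noncomputable def outerRadius {N : ℕ} (u : ℝ → EuclideanSpace ℝ (Fin N) → ℝ)
    (θ t : ℝ) : ℝ :=
  sInf {r : ℝ | 0 < r ∧ ∃ x₀, ∀ x ∉ Metric.ball x₀ r, u t x ≤ θ}

/-- The centered inscribed radius `r_θ(t)`: the supremum of radii `r` such that
`u (t, ·) > θ` on the centered ball `B_r(0)` (equal to `0` if no positive `r` works). -/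
noncomputable def centeredRadius {N : ℕ} (u : ℝ → EuclideanSpace ℝ (Fin N) → ℝ)
    (θ t : ℝ) : ℝ :=
  sSup {r : ℝ | ∀ x : EuclideanSpace ℝ (Fin N), ‖x‖ < r → θ < u t x}

/-- Hypothesis (f≥g): `f(t,z) ≥ g(z)` with `g` continuous, `g ≤ 0` on `(0,θ₀)`,
`g > 0` on `(θ₀,Z)` and `∫₀^Z g > 0`. -/
def HypFG (f : ℝ → ℝ → ℝ) (g : ℝ → ℝ) (θ₀ Z : ℝ) : Prop :=
  ContinuousOn g (Set.Ici 0) ∧ (∀ t ≥ (0:ℝ), ∀ z ≥ (0:ℝ), g z ≤ f t z) ∧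
  0 < θ₀ ∧ θ₀ < Z ∧ (∀ z ∈ Set.Ioo 0 θ₀, g z ≤ 0) ∧ (∀ z ∈ Set.Ioo θ₀ Z, 0 < g z) ∧
  0 < ∫ z in (0:ℝ)..Z, g z

/-- Hypothesis (KPP): `inf_{t>0} f(t,z) > 0` for every `z ∈ (0,Z)` and
`z ↦ f(t,z)/z` is nonincreasing on `(0,∞)` for every `t > 0`. -/
def HypKPP (f : ℝ → ℝ → ℝ) (Z : ℝ) : Prop :=
  0 < Z ∧ (∀ z ∈ Set.Ioo 0 Z, ∃ ε > (0:ℝ), ∀ t > (0:ℝ), ε ≤ f t z) ∧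
  (∀ t > (0:ℝ), AntitoneOn (fun z => f t z / z) (Set.Ioi 0))

/-- The centered inscribed radius `r_θ(t)` valued in `ℝ≥0∞`: the supremum of radii `r`
such that `u(t,·) > θ` on the centered ball `B_r(0)` (equal to `0` if no such `r`
exists). -/
noncomputable def centeredRadiusE {N : ℕ} (u : ℝ → EuclideanSpace ℝ (Fin N) → ℝ)
    (θ t : ℝ) : ℝ≥0∞ :=
  ⨆ (r : ℝ≥0) (_ : ∀ x : EuclideanSpace ℝ (Fin N), ‖x‖ < (r : ℝ) → θ < u t x),
    (r : ℝ≥0∞)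


lemma lspb_secondDeriv_nonneg (h h' : ℝ → ℝ) (c : ℝ)
    (hh : ∀ τ, HasDerivAt h (h' τ) τ) (hh' : HasDerivAt h' c 0)
    (hmin : ∀ τ, h 0 ≤ h τ) : 0 ≤ c := by
  have h'0 : h' 0 = 0 := by
    have hloc : IsLocalMin h 0 := IsMinOn.isLocalMin (fun τ _ => hmin τ) Filter.univ_mem
    have := hloc.deriv_eq_zero
    rwa [(hh 0).deriv] at this
  by_contra hc
  push_neg at hc
  have hslope : Tendsto (slope h' 0) (nhdsWithin 0 {(0:ℝ)}ᶜ) (nhds c) :=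
    hasDerivAt_iff_tendsto_slope.mp hh'
  have hslope' : Tendsto (slope h' 0) (nhdsWithin 0 (Set.Ioi 0)) (nhds c) :=
    hslope.mono_left (nhdsWithin_mono _ (fun x hx => ne_of_gt hx))
  have hev : ∀ᶠ τ in nhdsWithin (0:ℝ) (Set.Ioi 0), slope h' 0 τ < 0 :=
    hslope'.eventually_lt_const hc
  have hev2 : ∀ᶠ τ in nhdsWithin (0:ℝ) (Set.Ioi 0), h' τ < 0 := by
    filter_upwards [hev, self_mem_nhdsWithin] with τ h1 h2
    have hτ : (0:ℝ) < τ := h2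
    have hs : slope h' 0 τ = h' τ / τ := by simp [slope_def_field, h'0]
    rw [hs] at h1
    by_contra hge
    push_neg at hge
    have : 0 ≤ h' τ / τ := div_nonneg hge (le_of_lt hτ)
    linarith
  obtain ⟨δ, hδ0, hδ⟩ := (nhdsGT_basis (0:ℝ)).eventually_iff.mp hev2
  have hanti : StrictAntiOn h (Set.Icc 0 δ) := by
    apply strictAntiOn_of_deriv_neg (convex_Icc 0 δ)
    · exact fun x _ => (hh x).differentiableAt.continuousAt.continuousWithinAt
    · intro x hx
      rw [interior_Icc] at hx
      rw [(hh x).deriv]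
      exact hδ ⟨hx.1, hx.2⟩
  have := hanti (Set.left_mem_Icc.mpr (le_of_lt hδ0)) (Set.right_mem_Icc.mpr (le_of_lt hδ0)) hδ0
  exact absurd (hmin δ) (by linarith)

lemma lspb_deriv_le_zero (φ : ℝ → ℝ) (d s₀ : ℝ) (hs₀ : 0 < s₀)
    (hφ : HasDerivAt φ d s₀) (hmin : ∀ s, 0 < s → s < s₀ → φ s₀ ≤ φ s) : d ≤ 0 := by
  have hslope : Tendsto (slope φ s₀) (nhdsWithin s₀ {s₀}ᶜ) (nhds d) :=
    hasDerivAt_iff_tendsto_slope.mp hφ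
  have hslope' : Tendsto (slope φ s₀) (nhdsWithin s₀ (Set.Iio s₀)) (nhds d) :=
    hslope.mono_left (nhdsWithin_mono _ (fun x hx => ne_of_lt hx))
  have hne : (nhdsWithin s₀ (Set.Iio s₀)).NeBot := nhdsLT_neBot s₀
  refine le_of_tendsto hslope' ?_
  have hIoo : Set.Ioo 0 s₀ ∈ nhdsWithin s₀ (Set.Iio s₀) := by
    refine mem_nhdsWithin.mpr ⟨Set.Ioi 0, isOpen_Ioi, hs₀, ?_⟩
    rintro x ⟨hx1, hx2⟩
    exact ⟨hx1, hx2⟩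
  filter_upwards [hIoo] with s hs
  have hnum : 0 ≤ φ s - φ s₀ := sub_nonneg.mpr (hmin s hs.1 hs.2)
  have hden : s - s₀ ≤ 0 := le_of_lt (sub_neg.mpr hs.2)
  rw [slope_def_field]
  exact div_nonpos_of_nonneg_of_nonpos hnum hden
variable {N : ℕ}

lemma lspb_cd_fderiv_apply {φ : EuclideanSpace ℝ (Fin N) → ℝ} (hφ : ContDiff ℝ 2 φ)
    (e : EuclideanSpace ℝ (Fin N)) :
    ContDiff ℝ 1 (fun y => fderiv ℝ φ y e) := by
  have h1 : ContDiff ℝ 1 (fderiv ℝ φ) := hφ.fderiv_right (by norm_num)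
  exact (ContinuousLinearMap.apply ℝ ℝ e).contDiff.comp h1

lemma lspb_lap_sub {φ₁ φ₂ : EuclideanSpace ℝ (Fin N) → ℝ} (h₁ : ContDiff ℝ 2 φ₁)
    (h₂ : ContDiff ℝ 2 φ₂) (x : EuclideanSpace ℝ (Fin N)) :
    laplacian (fun y => φ₁ y - φ₂ y) x = laplacian φ₁ x - laplacian φ₂ x := by
  unfold laplacian
  rw [← Finset.sum_sub_distrib]
  refine Finset.sum_congr rfl (fun i _ => ?_)
  set e := EuclideanSpace.single i (1:ℝ)
  have hinner : (fun y => fderiv ℝ (fun z => φ₁ z - φ₂ z) y e)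
      = fun y => fderiv ℝ φ₁ y e - fderiv ℝ φ₂ y e := by
    funext y
    rw [fderiv_fun_sub (h₁.differentiable (by norm_num) y) (h₂.differentiable (by norm_num) y)]
    simp
  rw [hinner, fderiv_fun_sub ((lspb_cd_fderiv_apply h₁ e).differentiable (by norm_num) x)
    ((lspb_cd_fderiv_apply h₂ e).differentiable (by norm_num) x)]
  simp

lemma lspb_lap_add {φ₁ φ₂ : EuclideanSpace ℝ (Fin N) → ℝ} (h₁ : ContDiff ℝ 2 φ₁)
    (h₂ : ContDiff ℝ 2 φ₂) (x : EuclideanSpace ℝ (Fin N)) :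
    laplacian (fun y => φ₁ y + φ₂ y) x = laplacian φ₁ x + laplacian φ₂ x := by
  unfold laplacian
  rw [← Finset.sum_add_distrib]
  refine Finset.sum_congr rfl (fun i _ => ?_)
  set e := EuclideanSpace.single i (1:ℝ)
  have hinner : (fun y => fderiv ℝ (fun z => φ₁ z + φ₂ z) y e)
      = fun y => fderiv ℝ φ₁ y e + fderiv ℝ φ₂ y e := by
    funext y
    rw [fderiv_fun_add (h₁.differentiable (by norm_num) y) (h₂.differentiable (by norm_num) y)]
    simp
  rw [hinner, fderiv_fun_add ((lspb_cd_fderiv_apply h₁ e).differentiable (by norm_num) x)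
    ((lspb_cd_fderiv_apply h₂ e).differentiable (by norm_num) x)]
  simp

lemma lspb_lap_const_mul {φ : EuclideanSpace ℝ (Fin N) → ℝ} (h : ContDiff ℝ 2 φ) (c : ℝ)
    (x : EuclideanSpace ℝ (Fin N)) :
    laplacian (fun y => c * φ y) x = c * laplacian φ x := by
  unfold laplacian
  rw [Finset.mul_sum]
  refine Finset.sum_congr rfl (fun i _ => ?_)
  set e := EuclideanSpace.single i (1:ℝ)
  have hinner : (fun y => fderiv ℝ (fun z => c * φ z) y e)
      = fun y => c * fderiv ℝ φ y e := by
    funext y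
    rw [fderiv_const_mul (h.differentiable (by norm_num) y) c]
    simp
  rw [hinner, fderiv_const_mul ((lspb_cd_fderiv_apply h e).differentiable (by norm_num) x) c]
  simp

lemma lspb_lap_const_add {φ : EuclideanSpace ℝ (Fin N) → ℝ} (h : ContDiff ℝ 2 φ) (c : ℝ)
    (x : EuclideanSpace ℝ (Fin N)) :
    laplacian (fun y => c + φ y) x = laplacian φ x := by
  unfold laplacian
  refine Finset.sum_congr rfl (fun i _ => ?_)
  set e := EuclideanSpace.single i (1:ℝ)
  have hinner : (fun y => fderiv ℝ (fun z => c + φ z) y e)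
      = fun y => fderiv ℝ φ y e := by
    funext y
    rw [fderiv_const_add c]
  rw [hinner]

lemma lspb_lap_translate {φ : EuclideanSpace ℝ (Fin N) → ℝ} (h : ContDiff ℝ 2 φ)
    (ξ x : EuclideanSpace ℝ (Fin N)) :
    laplacian (fun y => φ (y - ξ)) x = laplacian φ (x - ξ) := by
  unfold laplacian
  refine Finset.sum_congr rfl (fun i _ => ?_)
  set e := EuclideanSpace.single i (1:ℝ)
  have hkey : ∀ (g : EuclideanSpace ℝ (Fin N) → ℝ), Differentiable ℝ g →
      ∀ y, fderiv ℝ (fun z => g (z - ξ)) y = fderiv ℝ g (y - ξ) := by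
    intro g hg y
    have h1 : HasFDerivAt (fun z : EuclideanSpace ℝ (Fin N) => z - ξ)
        (ContinuousLinearMap.id ℝ _) y := (hasFDerivAt_id y).sub_const ξ
    have h2 : HasFDerivAt g (fderiv ℝ g (y - ξ)) (y - ξ) := (hg (y - ξ)).hasFDerivAt
    have := h2.comp y h1
    simpa [Function.comp_def] using this.fderiv
  have hinner : (fun y => fderiv ℝ (fun z => φ (z - ξ)) y e)
      = fun y => fderiv ℝ φ (y - ξ) e := by
    funext y
    rw [hkey φ (h.differentiable (by norm_num)) y]
  rw [hinner]
  have : (fun y => fderiv ℝ φ (y - ξ) e)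
      = fun y => (fun z => fderiv ℝ φ z e) (y - ξ) := rfl
  rw [this, hkey _ ((lspb_cd_fderiv_apply h e).differentiable (by norm_num))]
variable {N : ℕ}

noncomputable def lspbQ (x : EuclideanSpace ℝ (Fin N)) : ℝ := ∑ i, (x i)^2

lemma lspbQ_eq_normsq (x : EuclideanSpace ℝ (Fin N)) : lspbQ x = ‖x‖^2 := by
  rw [EuclideanSpace.norm_eq, Real.sq_sqrt (by positivity)]
  unfold lspbQ
  simp [Real.norm_eq_abs, sq_abs]

lemma lspbQ_contDiff : ContDiff ℝ 2 (lspbQ (N := N)) := by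
  unfold lspbQ
  apply ContDiff.sum
  intro i _
  exact ((EuclideanSpace.proj i).contDiff (𝕜 := ℝ)).pow 2

lemma lspbQ_hasFDerivAt (y : EuclideanSpace ℝ (Fin N)) :
    HasFDerivAt lspbQ (∑ i, (2 * y i) • (EuclideanSpace.proj i
      : EuclideanSpace ℝ (Fin N) →L[ℝ] ℝ)) y := by
  unfold lspbQ
  apply HasFDerivAt.fun_sum
  intro i _
  have h := (EuclideanSpace.proj (𝕜 := ℝ) i).hasFDerivAt (x := y)
  have := h.mul h
  simpa [two_mul, add_smul, sq, Pi.mul_def] using this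

lemma lspbQ_fderiv_apply (y e : EuclideanSpace ℝ (Fin N)) :
    fderiv ℝ lspbQ y e = ∑ i, 2 * y i * e i := by
  rw [(lspbQ_hasFDerivAt y).fderiv]
  simp [smul_eq_mul]

lemma lspbQ_lap (x : EuclideanSpace ℝ (Fin N)) : laplacian lspbQ x = 2 * N := by
  unfold laplacian
  have hterm : ∀ i : Fin N,
      fderiv ℝ (fun y => fderiv ℝ lspbQ y (EuclideanSpace.single i (1:ℝ))) x
        (EuclideanSpace.single i (1:ℝ)) = 2 := by
    intro i
    have hfun : (fun y : EuclideanSpace ℝ (Fin N) =>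
        fderiv ℝ lspbQ y (EuclideanSpace.single i (1:ℝ))) = fun y => 2 * y i := by
      funext y
      rw [lspbQ_fderiv_apply]
      rw [Finset.sum_eq_single i]
      · simp
      · intro j _ hj
        simp [EuclideanSpace.single_apply, hj]
      · simp
    rw [hfun]
    have h : HasFDerivAt (fun y : EuclideanSpace ℝ (Fin N) => 2 * y i)
        ((2:ℝ) • (EuclideanSpace.proj i : EuclideanSpace ℝ (Fin N) →L[ℝ] ℝ)) x := by
      have := (EuclideanSpace.proj (𝕜 := ℝ) i).hasFDerivAt (x := x)
      exact this.const_mul 2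
    rw [h.fderiv]
    simp [EuclideanSpace.single_apply]
  rw [Finset.sum_congr rfl (fun i _ => hterm i)]
  simp [mul_comm]
lemma lspb_lap_nonneg {ψ : EuclideanSpace ℝ (Fin N) → ℝ} (hψ : ContDiff ℝ 2 ψ)
    (x₀ : EuclideanSpace ℝ (Fin N)) (hmin : ∀ x, ψ x₀ ≤ ψ x) : 0 ≤ laplacian ψ x₀ := by
  unfold laplacian
  apply Finset.sum_nonneg
  intro i _
  set e := EuclideanSpace.single i (1:ℝ) with he
  set c : ℝ → EuclideanSpace ℝ (Fin N) := fun τ => x₀ + τ • e with hc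
  have hc0 : c 0 = x₀ := by simp [hc]
  have hcd : ∀ τ, HasDerivAt c e τ := by
    intro τ
    have := ((hasDerivAt_id τ).smul_const e).const_add x₀
    rw [one_smul] at this
    exact this
  set G : EuclideanSpace ℝ (Fin N) → ℝ := fun y => fderiv ℝ ψ y e with hG
  have hGdiff : Differentiable ℝ G := (lspb_cd_fderiv_apply hψ e).differentiable (by norm_num)
  have hh : ∀ τ, HasDerivAt (fun τ => ψ (c τ)) (G (c τ)) τ := by
    intro τ
    exact ((hψ.differentiable (by norm_num)) (c τ)).hasFDerivAt.comp_hasDerivAt τ (hcd τ)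
  have hh' : HasDerivAt (fun τ => G (c τ)) (fderiv ℝ G x₀ e) 0 := by
    have := (hGdiff (c 0)).hasFDerivAt.comp_hasDerivAt 0 (hcd 0)
    rwa [hc0] at this
  have := lspb_secondDeriv_nonneg (fun τ => ψ (c τ)) (fun τ => G (c τ)) _ hh hh'
    (fun τ => by show ψ (c 0) ≤ ψ (c τ); rw [hc0]; exact hmin (c τ))
  exact this

lemma lspb_arith (N : ℕ) (Lr K e ε q du dv lu lv fU fV gV : ℝ)
    (hLr0 : 0 ≤ Lr) (hK : K = Lr + 2 * N + 1) (hε : 0 < ε) (he : 0 < e) (hq : 1 ≤ q)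
    (hdle : du - dv + ε * (e * K) * q ≤ 0)
    (hueq : du = lu + fU) (hveq : dv = lv + gV)
    (hlap0 : 0 ≤ lu - lv + ε * e * (2 * N))
    (hflow : -(Lr * (ε * e * q)) ≤ fU - fV)
    (hfVg : gV ≤ fV) : False := by
  have hNc : (0:ℝ) ≤ (N:ℝ) := Nat.cast_nonneg N
  have hc : 0 < ε * e := mul_pos hε he
  have hcq : ε * e * 1 ≤ ε * e * q := mul_le_mul_of_nonneg_left hq hc.le
  nlinarith [hdle, hlap0, hflow, hfVg, hcq, hc]

lemma lspb_main {N : ℕ} (f : ℝ → ℝ → ℝ) (hf : StandingAssumptions f)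
    (g : ℝ → ℝ)
    (hfg : ∀ t ≥ (0:ℝ), ∀ z ≥ (0:ℝ), g z ≤ f t z)
    (θ T : ℝ) (hT : 0 < T)
    (v₀ : EuclideanSpace ℝ (Fin N) → ℝ)
    (v : ℝ → EuclideanSpace ℝ (Fin N) → ℝ)
    (hv : IsClassicalSolution (fun _ z => g z) v v₀)
    (hvnn : ∀ s ≥ (0:ℝ), ∀ x, 0 ≤ v s x)
    (hvT : θ < v T 0)
    (u₀ : EuclideanSpace ℝ (Fin N) → ℝ)
    (u : ℝ → EuclideanSpace ℝ (Fin N) → ℝ) (hu : IsClassicalSolution f u u₀)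
    (t : ℝ) (ht : 0 < t) (ξ : EuclideanSpace ℝ (Fin N))
    (hinit : ∀ x, v₀ (x - ξ) ≤ u t x) :
    θ < u (t + T) ξ := by
  classical
  obtain ⟨L, hL⟩ := hf.2.1
  set Lr : ℝ := (L : ℝ) with hLrdef
  have hLr0 : 0 ≤ Lr := L.coe_nonneg
  set K : ℝ := Lr + 2 * N + 1 with hKdef
  have hK0 : 0 < K := by positivity
  obtain ⟨Cu, hCu⟩ := hu.bounded (t + T) (by linarith)
  obtain ⟨Cv, hCv⟩ := hv.bounded T hT
  set M : ℝ := Cu + Cv with hMdef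
  have hMw : ∀ s ∈ Set.Icc (0:ℝ) T, ∀ x, |u (t + s) x - v s (x - ξ)| ≤ M := by
    intro s hs x
    have h1 : |u (t + s) x| ≤ Cu := hCu (t + s) ⟨by linarith [hs.1], by linarith [hs.2]⟩ x
    have h2 : |v s (x - ξ)| ≤ Cv := hCv s hs (x - ξ)
    calc |u (t + s) x - v s (x - ξ)| ≤ |u (t + s) x| + |v s (x - ξ)| := abs_sub _ _
    _ ≤ M := by rw [hMdef]; linarith
  have hM0 : 0 ≤ M := le_trans (abs_nonneg _) (hMw 0 ⟨le_refl _, hT.le⟩ 0)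
  have hQ0 : ∀ x : EuclideanSpace ℝ (Fin N), 0 ≤ lspbQ x := by
    intro x; rw [lspbQ_eq_normsq]; positivity
  -- MAIN CLAIM
  have hclaim : ∀ ε > (0:ℝ), ∀ s ∈ Set.Icc (0:ℝ) T, ∀ x,
      0 < u (t + s) x - v s (x - ξ) + ε * Real.exp (K * s) * (1 + lspbQ x) := by
    intro ε hε
    set W : ℝ → EuclideanSpace ℝ (Fin N) → ℝ :=
      fun s x => u (t + s) x - v s (x - ξ) + ε * Real.exp (K * s) * (1 + lspbQ x) with hWdef
    show ∀ s ∈ Set.Icc (0:ℝ) T, ∀ x, 0 < W s x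
    by_contra hcon
    push_neg at hcon
    obtain ⟨s₁, hs₁, x₁, hWx₁⟩ := hcon
    set ρ : ℝ := Real.sqrt (M / ε) with hρdef
    have hexp1 : ∀ s ∈ Set.Icc (0:ℝ) T, 1 ≤ Real.exp (K * s) := by
      intro s hs
      exact Real.one_le_exp (mul_nonneg hK0.le hs.1)
    have hball : ∀ s ∈ Set.Icc (0:ℝ) T, ∀ x, W s x ≤ 0 →
        x ∈ Metric.closedBall (0 : EuclideanSpace ℝ (Fin N)) ρ := by
      intro s hs x hW
      have hw := hMw s hs x
      have hw1 : -M ≤ u (t + s) x - v s (x - ξ) := (abs_le.mp hw).1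
      have hWle : u (t + s) x - v s (x - ξ) + ε * Real.exp (K * s) * (1 + lspbQ x) ≤ 0 := hW
      have he := hexp1 s hs
      have h1Q : (0:ℝ) ≤ 1 + lspbQ x := by linarith [hQ0 x]
      have key : ε * (1 + lspbQ x) ≤ M := by nlinarith
      have hQle : lspbQ x ≤ M / ε := by
        rw [le_div_iff₀ hε]; nlinarith
      have : ‖x‖ ≤ ρ := by
        rw [hρdef]
        refine (Real.le_sqrt (norm_nonneg x) (div_nonneg hM0 hε.le)).mpr ?_
        rw [← lspbQ_eq_normsq]; exact hQle
      simpa [Metric.mem_closedBall, dist_zero_right] using this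
    have hout : ∀ s ∈ Set.Icc (0:ℝ) T, ∀ x,
        x ∉ Metric.closedBall (0 : EuclideanSpace ℝ (Fin N)) ρ → 0 < W s x := by
      intro s hs x hx
      by_contra h
      push_neg at h
      exact hx (hball s hs x h)
    -- continuity of W on [0,T] × ℝ^N
    have hQcont : Continuous (lspbQ (N := N)) := lspbQ_contDiff.continuous
    have hc1 : ContinuousOn (fun p : ℝ × EuclideanSpace ℝ (Fin N) => u (t + p.1) p.2)
        (Set.Icc (0:ℝ) T ×ˢ (Set.univ : Set (EuclideanSpace ℝ (Fin N)))) := by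
      have hcm : Continuous (fun p : ℝ × EuclideanSpace ℝ (Fin N) => ((t + p.1, p.2) : ℝ × EuclideanSpace ℝ (Fin N))) :=
        (continuous_const.add continuous_fst).prodMk continuous_snd
      show ContinuousOn ((Function.uncurry u) ∘ (fun p : ℝ × EuclideanSpace ℝ (Fin N) => (t + p.1, p.2)))
        (Set.Icc (0:ℝ) T ×ˢ (Set.univ : Set (EuclideanSpace ℝ (Fin N))))
      refine ContinuousOn.comp hu.cont hcm.continuousOn ?_
      rintro ⟨s, x⟩ ⟨hs, -⟩
      exact ⟨by simp only [Set.mem_Ici]; linarith [hs.1], trivial⟩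
    have hc2 : ContinuousOn (fun p : ℝ × EuclideanSpace ℝ (Fin N) => v p.1 (p.2 - ξ))
        (Set.Icc (0:ℝ) T ×ˢ (Set.univ : Set (EuclideanSpace ℝ (Fin N)))) := by
      have hcm : Continuous (fun p : ℝ × EuclideanSpace ℝ (Fin N) => ((p.1, p.2 - ξ) : ℝ × EuclideanSpace ℝ (Fin N))) :=
        continuous_fst.prodMk (continuous_snd.sub continuous_const)
      show ContinuousOn ((Function.uncurry v) ∘ (fun p : ℝ × EuclideanSpace ℝ (Fin N) => (p.1, p.2 - ξ)))
        (Set.Icc (0:ℝ) T ×ˢ (Set.univ : Set (EuclideanSpace ℝ (Fin N))))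
      refine ContinuousOn.comp hv.cont hcm.continuousOn ?_
      rintro ⟨s, x⟩ ⟨hs, -⟩
      exact ⟨hs.1, trivial⟩
    have hc3 : Continuous (fun p : ℝ × EuclideanSpace ℝ (Fin N) =>
        ε * Real.exp (K * p.1) * (1 + lspbQ p.2)) :=
      ((continuous_const.mul (Real.continuous_exp.comp (continuous_const.mul continuous_fst))).mul
        (continuous_const.add (hQcont.comp continuous_snd)))
    have hWc : ContinuousOn (fun p : ℝ × EuclideanSpace ℝ (Fin N) => W p.1 p.2)
        (Set.Icc (0:ℝ) T ×ˢ (Set.univ : Set (EuclideanSpace ℝ (Fin N)))) :=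
      (hc1.sub hc2).add hc3.continuousOn
    -- the compact set of bad points
    set K0 : Set (ℝ × EuclideanSpace ℝ (Fin N)) :=
      Set.Icc (0:ℝ) T ×ˢ Metric.closedBall (0 : EuclideanSpace ℝ (Fin N)) ρ with hK0def
    have hK0comp : IsCompact K0 := isCompact_Icc.prod (isCompact_closedBall _ _)
    have hK0closed : IsClosed K0 := isClosed_Icc.prod Metric.isClosed_closedBall
    set A : Set (ℝ × EuclideanSpace ℝ (Fin N)) :=
      K0 ∩ (fun p : ℝ × EuclideanSpace ℝ (Fin N) => W p.1 p.2) ⁻¹' (Set.Iic 0) with hAdef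
    have hAclosed : IsClosed A := by
      refine ContinuousOn.preimage_isClosed_of_isClosed ?_ hK0closed isClosed_Iic
      exact hWc.mono (fun p hp => ⟨hp.1, trivial⟩)
    have hAcomp : IsCompact A := hK0comp.of_isClosed_subset hAclosed Set.inter_subset_left
    have hAne : A.Nonempty :=
      ⟨(s₁, x₁), ⟨⟨hs₁, hball s₁ hs₁ x₁ hWx₁⟩, hWx₁⟩⟩
    obtain ⟨p₀, hp₀A, hp₀min⟩ := hAcomp.exists_isMinOn hAne continuous_fst.continuousOn
    set s₀ : ℝ := p₀.1 with hs₀def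
    have hp₀s : s₀ ∈ Set.Icc (0:ℝ) T := hp₀A.1.1
    have hp₀W : W s₀ p₀.2 ≤ 0 := hp₀A.2
    have hW0pos : ∀ x, 0 < W 0 x := by
      intro x
      have hv0 : v 0 (x - ξ) = v₀ (x - ξ) := by rw [hv.init]
      have h1 : W 0 x = u t x - v₀ (x - ξ) + ε * (1 + lspbQ x) := by
        simp only [hWdef, add_zero, mul_zero, Real.exp_zero, mul_one, hv0]
      rw [h1]
      have := hinit x
      nlinarith [hQ0 x]
    have hs₀pos : 0 < s₀ := by
      rcases eq_or_lt_of_le hp₀s.1 with h | h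
      · exfalso; rw [← h] at hp₀W; exact absurd hp₀W (not_le.mpr (hW0pos p₀.2))
      · exact h
    have hfirst : ∀ s, 0 < s → s < s₀ → ∀ x, 0 < W s x := by
      intro s h1 h2 x
      by_contra h
      push_neg at h
      have hsIcc : s ∈ Set.Icc (0:ℝ) T := ⟨h1.le, le_trans h2.le hp₀s.2⟩
      have hmem : (s, x) ∈ A := ⟨⟨hsIcc, hball s hsIcc x h⟩, h⟩
      have := hp₀min hmem
      simp only [hs₀def] at h2
      exact absurd this (not_le.mpr h2)
    -- the spatial minimizer at time s₀
    have hconts₀ : Continuous (fun x => W s₀ x) := by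
      refine continuousOn_univ.mp ?_
      show ContinuousOn ((fun p : ℝ × EuclideanSpace ℝ (Fin N) => W p.1 p.2)
        ∘ (fun x : EuclideanSpace ℝ (Fin N) => (s₀, x))) Set.univ
      refine ContinuousOn.comp hWc
        ((continuous_const.prodMk continuous_id).continuousOn) ?_
      exact fun x _ => ⟨hp₀s, trivial⟩
    obtain ⟨x₀, hx₀ball, hx₀min⟩ := (isCompact_closedBall (0 : EuclideanSpace ℝ (Fin N)) ρ).exists_isMinOn
      ⟨p₀.2, hball s₀ hp₀s p₀.2 hp₀W⟩ hconts₀.continuousOn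
    have hx₀W : W s₀ x₀ ≤ 0 := le_trans (hx₀min (hball s₀ hp₀s p₀.2 hp₀W)) hp₀W
    have hx₀glob : ∀ x, W s₀ x₀ ≤ W s₀ x := by
      intro x
      by_cases hx : x ∈ Metric.closedBall (0 : EuclideanSpace ℝ (Fin N)) ρ
      · exact hx₀min hx
      · exact le_trans hx₀W (hout s₀ hp₀s x hx).le
    -- W s₀ x₀ = 0 by continuity from the left
    have hW0 : W s₀ x₀ = 0 := by
      have hcs : ContinuousOn (fun s => W s x₀) (Set.Icc (0:ℝ) T) := by
        show ContinuousOn ((fun p : ℝ × EuclideanSpace ℝ (Fin N) => W p.1 p.2)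
          ∘ (fun s : ℝ => (s, x₀))) (Set.Icc (0:ℝ) T)
        refine ContinuousOn.comp hWc
          ((continuous_id.prodMk continuous_const).continuousOn) ?_
        exact fun s hs => ⟨hs, trivial⟩
      have htend : Filter.Tendsto (fun s => W s x₀) (nhdsWithin s₀ (Set.Ioo 0 s₀))
          (nhds (W s₀ x₀)) := by
        have h1 : Set.Ioo (0:ℝ) s₀ ⊆ Set.Icc (0:ℝ) T :=
          fun s hs => ⟨hs.1.le, le_trans hs.2.le hp₀s.2⟩
        exact (hcs s₀ hp₀s).mono_left (nhdsWithin_mono _ h1)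
      haveI := right_nhdsWithin_Ioo_neBot hs₀pos
      have hge : 0 ≤ W s₀ x₀ := by
        refine ge_of_tendsto htend ?_
        filter_upwards [self_mem_nhdsWithin] with s hs
        exact (hfirst s hs.1 hs.2 x₀).le
      linarith
    -- time derivative at (s₀, x₀)
    have htu : 0 < t + s₀ := by linarith
    have hdu : HasDerivAt (fun s => u (t + s) x₀) (deriv (fun s' => u s' x₀) (t + s₀)) s₀ := by
      have h1 := (hu.time_diff x₀ (t + s₀) htu).hasDerivAt
      have h2 : HasDerivAt (fun s : ℝ => t + s) 1 s₀ := by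
        simpa using (hasDerivAt_id s₀).const_add t
      have := h1.comp s₀ h2
      rw [mul_one] at this
      exact this
    have hdv : HasDerivAt (fun s => v s (x₀ - ξ)) (deriv (fun s' => v s' (x₀ - ξ)) s₀) s₀ :=
      (hv.time_diff (x₀ - ξ) s₀ hs₀pos).hasDerivAt
    have hde : HasDerivAt (fun s => ε * Real.exp (K * s) * (1 + lspbQ x₀))
        (ε * (Real.exp (K * s₀) * K) * (1 + lspbQ x₀)) s₀ := by
      have h2 : HasDerivAt (fun s : ℝ => K * s) K s₀ := by
        simpa using (hasDerivAt_id s₀).const_mul K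
      have h3 := (Real.hasDerivAt_exp (K * s₀)).comp s₀ h2
      have h4 := (h3.const_mul ε).mul_const (1 + lspbQ x₀)
      exact h4
    have hWd : HasDerivAt (fun s => W s x₀)
        (deriv (fun s' => u s' x₀) (t + s₀) - deriv (fun s' => v s' (x₀ - ξ)) s₀
          + ε * (Real.exp (K * s₀) * K) * (1 + lspbQ x₀)) s₀ := by
      simp only [hWdef]
      exact (hdu.sub hdv).add hde
    have hdle : deriv (fun s' => u s' x₀) (t + s₀) - deriv (fun s' => v s' (x₀ - ξ)) s₀
        + ε * (Real.exp (K * s₀) * K) * (1 + lspbQ x₀) ≤ 0 := by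
      refine lspb_deriv_le_zero _ _ s₀ hs₀pos hWd ?_
      intro s h1 h2
      show W s₀ x₀ ≤ W s x₀
      rw [hW0]
      exact (hfirst s h1 h2 x₀).le
    -- laplacian at (s₀, x₀)
    have hA2 : ContDiff ℝ 2 (u (t + s₀)) := hu.space_smooth _ htu
    have hvs : ContDiff ℝ 2 (v s₀) := hv.space_smooth _ hs₀pos
    have hB2 : ContDiff ℝ 2 (fun x : EuclideanSpace ℝ (Fin N) => v s₀ (x - ξ)) :=
      hvs.comp (contDiff_id.sub contDiff_const)
    have hC2 : ContDiff ℝ 2 (fun x : EuclideanSpace ℝ (Fin N) =>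
        ε * Real.exp (K * s₀) * (1 + lspbQ x)) :=
      contDiff_const.mul (contDiff_const.add lspbQ_contDiff)
    have hψ2 : ContDiff ℝ 2 (fun x => W s₀ x) := by
      simp only [hWdef]
      exact (hA2.sub hB2).add hC2
    have hlap0 : 0 ≤ laplacian (fun x => W s₀ x) x₀ := lspb_lap_nonneg hψ2 x₀ hx₀glob
    have hlapeq : laplacian (fun x => W s₀ x) x₀
        = laplacian (u (t + s₀)) x₀ - laplacian (v s₀) (x₀ - ξ)
          + ε * Real.exp (K * s₀) * (2 * N) := by
      have e1 : laplacian (fun x => W s₀ x) x₀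
          = laplacian (fun x : EuclideanSpace ℝ (Fin N) => u (t + s₀) x - v s₀ (x - ξ)) x₀
            + laplacian (fun x : EuclideanSpace ℝ (Fin N) =>
                ε * Real.exp (K * s₀) * (1 + lspbQ x)) x₀ := by
        simp only [hWdef]
        exact lspb_lap_add (hA2.sub hB2) hC2 x₀
      have e2 : laplacian (fun x : EuclideanSpace ℝ (Fin N) => u (t + s₀) x - v s₀ (x - ξ)) x₀
          = laplacian (u (t + s₀)) x₀
            - laplacian (fun x : EuclideanSpace ℝ (Fin N) => v s₀ (x - ξ)) x₀ :=
        lspb_lap_sub hA2 hB2 x₀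
      have e3 : laplacian (fun x : EuclideanSpace ℝ (Fin N) => v s₀ (x - ξ)) x₀
          = laplacian (v s₀) (x₀ - ξ) := lspb_lap_translate hvs ξ x₀
      have e4 : laplacian (fun x : EuclideanSpace ℝ (Fin N) =>
          ε * Real.exp (K * s₀) * (1 + lspbQ x)) x₀ = ε * Real.exp (K * s₀) * (2 * N) := by
        rw [lspb_lap_const_mul (contDiff_const.add lspbQ_contDiff) (ε * Real.exp (K * s₀)) x₀,
          lspb_lap_const_add lspbQ_contDiff 1 x₀, lspbQ_lap]
      rw [e1, e2, e3, e4]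
    -- the equations
    have hueq := hu.eqn (t + s₀) htu x₀
    have hveq := hv.eqn s₀ hs₀pos (x₀ - ξ)
    have hUV : u (t + s₀) x₀ - v s₀ (x₀ - ξ)
        = -(ε * Real.exp (K * s₀) * (1 + lspbQ x₀)) := by
      have h0 := hW0
      simp only [hWdef] at h0
      linarith
    have habs : |u (t + s₀) x₀ - v s₀ (x₀ - ξ)| = ε * Real.exp (K * s₀) * (1 + lspbQ x₀) := by
      rw [hUV, abs_neg]
      refine abs_of_nonneg ?_
      exact mul_nonneg (mul_nonneg hε.le (Real.exp_pos (K * s₀)).le)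
        (by linarith [hQ0 x₀])
    have hlip : |f (t + s₀) (u (t + s₀) x₀) - f (t + s₀) (v s₀ (x₀ - ξ))|
        ≤ Lr * |u (t + s₀) x₀ - v s₀ (x₀ - ξ)| := by
      have := (hL (t + s₀) htu).dist_le_mul (u (t + s₀) x₀) (v s₀ (x₀ - ξ))
      rwa [Real.dist_eq, Real.dist_eq] at this
    have hflow : -(Lr * (ε * Real.exp (K * s₀) * (1 + lspbQ x₀)))
        ≤ f (t + s₀) (u (t + s₀) x₀) - f (t + s₀) (v s₀ (x₀ - ξ)) := by
      rw [habs] at hlip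
      exact (abs_le.mp hlip).1
    have hfVg : g (v s₀ (x₀ - ξ)) ≤ f (t + s₀) (v s₀ (x₀ - ξ)) :=
      hfg (t + s₀) htu.le _ (hvnn s₀ hs₀pos.le _)
    -- final contradiction
    have hexp_pos : (0:ℝ) < Real.exp (K * s₀) := Real.exp_pos _
    have hcpos : (0:ℝ) < ε * Real.exp (K * s₀) := mul_pos hε hexp_pos
    have hq1 : (1:ℝ) ≤ 1 + lspbQ x₀ := by linarith [hQ0 x₀]
    have hcq : ε * Real.exp (K * s₀) * 1 ≤ ε * Real.exp (K * s₀) * (1 + lspbQ x₀) :=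
      mul_le_mul_of_nonneg_left hq1 hcpos.le
    rw [hlapeq] at hlap0
    exact lspb_arith N Lr K (Real.exp (K * s₀)) ε (1 + lspbQ x₀)
      (deriv (fun s' => u s' x₀) (t + s₀)) (deriv (fun s' => v s' (x₀ - ξ)) s₀)
      (laplacian (u (t + s₀)) x₀) (laplacian (v s₀) (x₀ - ξ))
      (f (t + s₀) (u (t + s₀) x₀)) (f (t + s₀) (v s₀ (x₀ - ξ))) (g (v s₀ (x₀ - ξ)))
      hLr0 hKdef hε hexp_pos hq1 hdle hueq hveq hlap0 hflow hfVg
  -- conclude: let ε → 0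
  have hD : 0 ≤ u (t + T) ξ - v T 0 := by
    by_contra hneg
    push_neg at hneg
    set C₀ : ℝ := Real.exp (K * T) * (1 + lspbQ ξ) with hC₀def
    have hC₀pos : 0 < C₀ := by
      rw [hC₀def]
      have := hQ0 ξ
      positivity
    set ε : ℝ := (v T 0 - u (t + T) ξ) / (2 * C₀) with hεdef
    have hεpos : 0 < ε := by
      rw [hεdef]
      apply div_pos (by linarith) (by linarith)
    have h1 := hclaim ε hεpos T ⟨hT.le, le_refl T⟩ ξ
    rw [sub_self] at h1
    have h2 : ε * Real.exp (K * T) * (1 + lspbQ ξ) = ε * C₀ := by rw [hC₀def]; ring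
    rw [h2] at h1
    have h3 : ε * C₀ = (v T 0 - u (t + T) ξ) / 2 := by
      rw [hεdef]; field_simp
    rw [h3] at h1
    linarith
  linarith

/-- If `f ≥ g`, `v` solves `∂ₛv = Δv + g(v)` with `0 ≤ v₀ ≤ θ'` supported
in the closed ball of radius `R` and `v(T,0) > θ`, and `u ≥ 0` solves
`∂ₜu = Δu + f(t,u)`, then `u(t+T,ξ) > θ` whenever `|ξ| < r_{θ'}(t) − R` (expressed as
`|ξ| + R < r_{θ'}(t)` in `ℝ≥0∞`); in particular `r_θ(t+T) ≥ r_{θ'}(t) − R`. -/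
theorem level_set_propagation_lower_bound
    {N : ℕ} (hN : 0 < N) (f : ℝ → ℝ → ℝ) (hf : StandingAssumptions f)
    (g : ℝ → ℝ) (hgcont : ContinuousOn g (Set.Ici 0))
    (hfg : ∀ t ≥ (0:ℝ), ∀ z ≥ (0:ℝ), g z ≤ f t z)
    (θ θ' R T : ℝ) (hθ' : 0 < θ') (hθ : θ' < θ) (hR : 0 < R) (hT : 0 < T)
    (v₀ : EuclideanSpace ℝ (Fin N) → ℝ) (hv₀cont : Continuous v₀)
    (hv₀nn : ∀ x, 0 ≤ v₀ x) (hv₀le : ∀ x, v₀ x ≤ θ')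
    (hv₀supp : tsupport v₀ ⊆ Metric.closedBall 0 R)
    (v : ℝ → EuclideanSpace ℝ (Fin N) → ℝ)
    (hv : IsClassicalSolution (fun _ z => g z) v v₀)
    (hvnn : ∀ s ≥ (0:ℝ), ∀ x, 0 ≤ v s x)
    (hvT : θ < v T 0)
    (u₀ : EuclideanSpace ℝ (Fin N) → ℝ)
    (u : ℝ → EuclideanSpace ℝ (Fin N) → ℝ) (hu : IsClassicalSolution f u u₀)
    (hunn : ∀ t ≥ (0:ℝ), ∀ x, 0 ≤ u t x) :
    ∀ t > (0:ℝ),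
      (∀ ξ : EuclideanSpace ℝ (Fin N),
        ENNReal.ofReal (‖ξ‖ + R) < centeredRadiusE u θ' t → θ < u (t + T) ξ) ∧
      centeredRadiusE u θ' t - ENNReal.ofReal R ≤ centeredRadiusE u θ (t + T) := by
  intro t ht
  have hpart1 : ∀ ξ : EuclideanSpace ℝ (Fin N),
      ENNReal.ofReal (‖ξ‖ + R) < centeredRadiusE u θ' t → θ < u (t + T) ξ := by
    intro ξ hξ
    rw [centeredRadiusE, lt_iSup_iff] at hξ
    obtain ⟨r, hr⟩ := hξ
    rw [lt_iSup_iff] at hr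
    obtain ⟨hcond, hlt⟩ := hr
    have hpos : (0:ℝ) < ‖ξ‖ + R := by linarith [norm_nonneg ξ]
    have hrpos : (0:ℝ) < (r:ℝ) := by
      by_contra h
      push_neg at h
      have hr0 : r = 0 := le_antisymm (by exact_mod_cast h) zero_le
      rw [hr0] at hlt
      simp at hlt
    have hlt' : ‖ξ‖ + R < (r:ℝ) := by
      rw [← ENNReal.ofReal_coe_nnreal] at hlt
      exact (ENNReal.ofReal_lt_ofReal_iff hrpos).mp hlt
    have hinit : ∀ x, v₀ (x - ξ) ≤ u t x := by
      intro x
      by_cases hx : x - ξ ∈ tsupport v₀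
      · have h1 : ‖x - ξ‖ ≤ R := by
          have := hv₀supp hx
          simpa [Metric.mem_closedBall, dist_zero_right] using this
        have h2 : ‖x‖ ≤ ‖ξ‖ + R := by
          calc ‖x‖ = ‖(x - ξ) + ξ‖ := by rw [sub_add_cancel]
          _ ≤ ‖x - ξ‖ + ‖ξ‖ := norm_add_le _ _
          _ ≤ ‖ξ‖ + R := by linarith
        have h3 : θ' < u t x := hcond x (by linarith)
        linarith [hv₀le (x - ξ)]
      · rw [image_eq_zero_of_notMem_tsupport hx]
        exact hunn t ht.le x
    exact lspb_main f hf g hfg θ T hT v₀ v hv hvnn hvT u₀ u hu t ht ξ hinit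
  refine ⟨hpart1, ?_⟩
  rw [tsub_le_iff_right, centeredRadiusE]
  refine iSup_le fun r => iSup_le fun hcond => ?_
  by_cases hrR : (r:ℝ) ≤ R
  · have h1 : (r:ℝ≥0∞) ≤ ENNReal.ofReal R := by
      rw [← ENNReal.ofReal_coe_nnreal]
      exact ENNReal.ofReal_le_ofReal hrR
    exact le_add_of_nonneg_of_le zero_le h1
  · push_neg at hrR
    set r' : ℝ≥0 := r - R.toNNReal with hr'def
    have hRr : R.toNNReal ≤ r := by
      rw [← NNReal.coe_le_coe, Real.coe_toNNReal R hR.le]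
      exact hrR.le
    have hr'coe : (r' : ℝ) = (r:ℝ) - R := by
      rw [hr'def, NNReal.coe_sub hRr, Real.coe_toNNReal R hR.le]
    have hrsup : (r : ℝ≥0∞) ≤ centeredRadiusE u θ' t := by
      rw [centeredRadiusE]
      exact le_iSup₂ (f := fun (r : ℝ≥0)
        (_ : ∀ x : EuclideanSpace ℝ (Fin N), ‖x‖ < (r : ℝ) → θ' < u t x) => (r : ℝ≥0∞)) r hcond
    have hcond' : ∀ x : EuclideanSpace ℝ (Fin N), ‖x‖ < (r' : ℝ) → θ < u (t + T) x := by
      intro x hx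
      rw [hr'coe] at hx
      refine hpart1 x ?_
      refine lt_of_lt_of_le ?_ hrsup
      rw [← ENNReal.ofReal_coe_nnreal]
      exact (ENNReal.ofReal_lt_ofReal_iff (lt_trans hR hrR)).mpr (by linarith)
    have h2 : (r' : ℝ≥0∞) ≤ centeredRadiusE u θ (t + T) := by
      rw [centeredRadiusE]
      exact le_iSup₂ (f := fun (s : ℝ≥0)
        (_ : ∀ x : EuclideanSpace ℝ (Fin N), ‖x‖ < (s : ℝ) → θ < u (t + T) x) => (s : ℝ≥0∞)) r' hcond'
    have h3 : (r : ℝ≥0∞) = (r' : ℝ≥0∞) + (R.toNNReal : ℝ≥0∞) := by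
      rw [← ENNReal.coe_add]
      norm_cast
      rw [hr'def, tsub_add_cancel_of_le hRr]
    rw [h3]
    have h4 : (R.toNNReal : ℝ≥0∞) = ENNReal.ofReal R := rfl
    rw [h4]
    exact add_le_add h2 le_rfl
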